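/- Let ν be a Borel probability measure on [0,1] and m ∈ [0,1]. Then the set F^m_ν = {[f]_ν : f ∈ F^m} of ν-equivalence classes of functions convex on [0,m], concave on [m,1], and increasing on [0,1] is a convex cone in L²(ν), and the Lipschitz elements of F^m are dense in F^m_ν with respect to the L²(ν) norm. -/

import Mathlib

open MeasureTheory Set

namespace Stmt12Aux

noncomputable def loF (f : ℝ → ℝ) (K x : ℝ) : ℝ :=
  ⨅ y : Icc (0:ℝ) 1, (f y + K * |x - (y : ℝ)|)

noncomputable def hiF (f : ℝ → ℝ) (K x : ℝ) : ℝ :=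
  ⨆ y : Icc (0:ℝ) 1, (f y - K * |x - (y : ℝ)|)

variable {f : ℝ → ℝ} {m K x p q ε δ : ℝ}

lemma mem01 : (0:ℝ) ∈ Icc (0:ℝ) 1 := ⟨le_refl 0, zero_le_one⟩
lemma mem11 : (1:ℝ) ∈ Icc (0:ℝ) 1 := ⟨zero_le_one, le_refl 1⟩

section lo

variable (hmono : MonotoneOn f (Icc 0 1)) (hK : 0 ≤ K)
include hmono hK

lemma lo_bdd (x : ℝ) :
    BddBelow (Set.range fun y : Icc (0:ℝ) 1 => f y + K * |x - (y:ℝ)|) := by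
  refine ⟨f 0, ?_⟩
  rintro v ⟨⟨y, hy⟩, rfl⟩
  have h1 : f 0 ≤ f y := hmono mem01 hy hy.1
  have h2 : 0 ≤ K * |x - y| := mul_nonneg hK (abs_nonneg _)
  simpa using add_le_add h1 h2

lemma lo_le {y : ℝ} (hy : y ∈ Icc (0:ℝ) 1) (x : ℝ) :
    loF f K x ≤ f y + K * |x - y| :=
  ciInf_le (lo_bdd hmono hK x) ⟨y, hy⟩

lemma lo_le_self (hx : x ∈ Icc (0:ℝ) 1) : loF f K x ≤ f x := by
  simpa using lo_le hmono hK hx x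

lemma f0_le_lo (x : ℝ) : f 0 ≤ loF f K x := by
  refine le_ciInf ?_
  rintro ⟨y, hy⟩
  have h1 : f 0 ≤ f y := hmono mem01 hy hy.1
  have h2 : 0 ≤ K * |x - y| := mul_nonneg hK (abs_nonneg _)
  simpa using add_le_add h1 h2

lemma exists_lo (hx : x ∈ Icc (0:ℝ) 1) (hε : 0 < ε) :
    ∃ y, y ∈ Icc (0:ℝ) 1 ∧ y ≤ x ∧ f y + K * (x - y) < loF f K x + ε := by
  have h : loF f K x < loF f K x + ε := by linarith
  obtain ⟨⟨y, hy⟩, hlt⟩ := exists_lt_of_ciInf_lt h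
  rcases le_or_gt y x with hyx | hyx
  · exact ⟨y, hy, hyx, by rwa [abs_of_nonneg (by linarith)] at hlt⟩
  · refine ⟨x, hx, le_refl x, ?_⟩
    have h1 : f x ≤ f y := hmono hx hy hyx.le
    have h2 : 0 ≤ K * |x - y| := mul_nonneg hK (abs_nonneg _)
    have : f x ≤ f y + K * |x - y| := by linarith
    simp only [sub_self, mul_zero, add_zero]
    linarith

lemma lo_mono : MonotoneOn (loF f K) (Icc 0 1) := by
  intro a ha b hb hab
  refine le_of_forall_pos_le_add fun ε hε => ?_
  obtain ⟨y, hy, hyb, hlt⟩ := exists_lo hmono hK hb hε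
  rcases le_or_gt y a with hya | hya
  · have h1 : loF f K a ≤ f y + K * |a - y| := lo_le hmono hK hy a
    rw [abs_of_nonneg (by linarith)] at h1
    have h2 : K * (a - y) ≤ K * (b - y) := by
      apply mul_le_mul_of_nonneg_left (by linarith) hK
    linarith
  · have h1 : loF f K a ≤ f a := lo_le_self hmono hK ha
    have h2 : f a ≤ f y := hmono ha hy hya.le
    have h3 : 0 ≤ K * (b - y) := mul_nonneg hK (by linarith)
    linarith

lemma lo_lip_oneside (x₁ x₂ : ℝ) : loF f K x₁ ≤ loF f K x₂ + K * |x₁ - x₂| := by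
  refine le_of_forall_pos_le_add fun ε hε => ?_
  have h : loF f K x₂ < loF f K x₂ + ε := by linarith
  obtain ⟨⟨y, hy⟩, hlt⟩ := exists_lt_of_ciInf_lt h
  have h1 : loF f K x₁ ≤ f y + K * |x₁ - y| := lo_le hmono hK hy x₁
  have h2 : |x₁ - y| ≤ |x₂ - y| + |x₁ - x₂| := by
    have := abs_sub_abs_le_abs_sub (x₁ - y) (x₂ - y)
    have h3 : |(x₁ - y) - (x₂ - y)| = |x₁ - x₂| := by ring_nf
    calc |x₁ - y| = |(x₁ - y) - (x₂ - y) + (x₂ - y)| := by ring_nf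
      _ ≤ |(x₁ - y) - (x₂ - y)| + |x₂ - y| := abs_add_le _ _
      _ = |x₁ - x₂| + |x₂ - y| := by rw [h3]
      _ = |x₂ - y| + |x₁ - x₂| := by ring
  have h4 : K * |x₁ - y| ≤ K * (|x₂ - y| + |x₁ - x₂|) :=
    mul_le_mul_of_nonneg_left h2 hK
  have h5 : K * (|x₂ - y| + |x₁ - x₂|) = K * |x₂ - y| + K * |x₁ - x₂| := by ring
  linarith

lemma lo_lower (hx : x ∈ Icc (0:ℝ) 1) (hδ : 0 < δ) :
    min (f (max (x - δ) 0)) (f 0 + K * δ) ≤ loF f K x := by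
  refine le_ciInf ?_
  rintro ⟨y, hy⟩
  rcases le_or_gt (x - δ) y with h | h
  · have hmem : max (x - δ) 0 ∈ Icc (0:ℝ) 1 :=
      ⟨le_max_right _ _, max_le (by linarith [hx.2]) zero_le_one⟩
    have h1 : f (max (x - δ) 0) ≤ f y := hmono hmem hy (max_le h hy.1)
    have h2 : 0 ≤ K * |x - y| := mul_nonneg hK (abs_nonneg _)
    have := min_le_left (f (max (x - δ) 0)) (f 0 + K * δ)
    simp only
    linarith
  · have h1 : f 0 ≤ f y := hmono mem01 hy hy.1
    have h2 : K * δ ≤ K * |x - y| := by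
      apply mul_le_mul_of_nonneg_left _ hK
      rw [abs_of_nonneg (by linarith)]
      linarith
    have := min_le_right (f (max (x - δ) 0)) (f 0 + K * δ)
    simp only
    linarith

lemma lo_convex (hcvx : ConvexOn ℝ (Icc 0 m) f) (hm : m ∈ Icc (0:ℝ) 1) :
    ConvexOn ℝ (Icc 0 m) (loF f K) := by
  refine ⟨convex_Icc _ _, ?_⟩
  intro p hp q hq a b ha hb hab
  simp only [smul_eq_mul]
  refine le_of_forall_pos_le_add fun ε hε => ?_
  have hp1 : p ∈ Icc (0:ℝ) 1 := ⟨hp.1, hp.2.trans hm.2⟩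
  have hq1 : q ∈ Icc (0:ℝ) 1 := ⟨hq.1, hq.2.trans hm.2⟩
  obtain ⟨y₁, hy₁, hy₁p, h1⟩ := exists_lo hmono hK hp1 hε
  obtain ⟨y₂, hy₂, hy₂q, h2⟩ := exists_lo hmono hK hq1 hε
  have hy₁m : y₁ ∈ Icc (0:ℝ) m := ⟨hy₁.1, hy₁p.trans hp.2⟩
  have hy₂m : y₂ ∈ Icc (0:ℝ) m := ⟨hy₂.1, hy₂q.trans hq.2⟩
  have hcomb : a * y₁ + b * y₂ ∈ Icc (0:ℝ) m := by
    have := (convex_Icc (0:ℝ) m) hy₁m hy₂m ha hb hab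
    simpa using this
  have hcomb1 : a * y₁ + b * y₂ ∈ Icc (0:ℝ) 1 := ⟨hcomb.1, hcomb.2.trans hm.2⟩
  have hfle : f (a * y₁ + b * y₂) ≤ a * f y₁ + b * f y₂ := by
    have := hcvx.2 hy₁m hy₂m ha hb hab
    simpa using this
  have hle : loF f K (a * p + b * q) ≤
      f (a * y₁ + b * y₂) + K * |a * p + b * q - (a * y₁ + b * y₂)| :=
    lo_le hmono hK hcomb1 _
  have habs : |a * p + b * q - (a * y₁ + b * y₂)| = a * (p - y₁) + b * (q - y₂) := by
    rw [abs_of_nonneg]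
    · ring
    · have := mul_le_mul_of_nonneg_left hy₁p ha
      have := mul_le_mul_of_nonneg_left hy₂q hb
      nlinarith
  have H1 : a * (f y₁ + K * (p - y₁)) ≤ a * (loF f K p + ε) :=
    mul_le_mul_of_nonneg_left h1.le ha
  have H2 : b * (f y₂ + K * (q - y₂)) ≤ b * (loF f K q + ε) :=
    mul_le_mul_of_nonneg_left h2.le hb
  have e1 : K * (a * (p - y₁) + b * (q - y₂))
      = a * (K * (p - y₁)) + b * (K * (q - y₂)) := by ring
  have e2 : a * (loF f K p + ε) + b * (loF f K q + ε)
      = a * loF f K p + b * loF f K q + ε := by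
    have hb' : b = 1 - a := by linarith
    subst hb'; ring
  rw [habs] at hle
  linarith

lemma lo_concave_aux (hccv : ConcaveOn ℝ (Icc m 1) f) (hm : m ∈ Icc (0:ℝ) 1)
    (hp : p ∈ Icc m 1) (hq : q ∈ Icc m 1) (hpq : p ≤ q)
    {a b : ℝ} (ha : 0 ≤ a) (hb : 0 ≤ b) (hab : a + b = 1) :
    a * loF f K p + b * loF f K q ≤ loF f K (a * p + b * q) := by
  have hp1 : p ∈ Icc (0:ℝ) 1 := ⟨hm.1.trans hp.1, hp.2⟩
  have hq1 : q ∈ Icc (0:ℝ) 1 := ⟨hm.1.trans hq.1, hq.2⟩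
  have hxmem : a * p + b * q ∈ Icc m 1 := by
    have := (convex_Icc m 1) hp hq ha hb hab
    simpa using this
  have hx1 : a * p + b * q ∈ Icc (0:ℝ) 1 := ⟨hm.1.trans hxmem.1, hxmem.2⟩
  refine le_of_forall_pos_le_add fun ε hε => ?_
  obtain ⟨y, hy, hyx, hlt⟩ := exists_lo hmono hK hx1 hε
  rcases eq_or_lt_of_le hb with hb0 | hb0
  · -- b = 0, a = 1
    subst hb0
    have ha1 : a = 1 := by linarith
    subst ha1
    simp only [one_mul, zero_mul, add_zero] at hyx hlt ⊢
    have h1 : loF f K p ≤ f y + K * (p - y) := by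
      have := lo_le hmono hK hy p
      rwa [abs_of_nonneg (by linarith)] at this
    linarith
  rcases le_or_gt y p with hyp | hyp
  · have h1 : loF f K p ≤ f y + K * (p - y) := by
      have := lo_le hmono hK hy p
      rwa [abs_of_nonneg (by linarith)] at this
    have h2 : loF f K q ≤ f y + K * (q - y) := by
      have := lo_le hmono hK hy q
      rwa [abs_of_nonneg (by linarith)] at this
    have H1 : a * loF f K p ≤ a * (f y + K * (p - y)) := mul_le_mul_of_nonneg_left h1 ha
    have H2 : b * loF f K q ≤ b * (f y + K * (q - y)) := mul_le_mul_of_nonneg_left h2 hb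
    have e : a * (f y + K * (p - y)) + b * (f y + K * (q - y))
        = f y + K * (a * p + b * q - y) := by
      have ha' : a = 1 - b := by linarith
      subst ha'; ring
    linarith
  · -- p < y ≤ x; set y₂ := (y - a*p)/b
    set y₂ : ℝ := (y - a * p) / b with hy₂def
    have hbne : b ≠ 0 := ne_of_gt hb0
    have heq : a * p + b * y₂ = y := by
      rw [hy₂def]; field_simp; ring
    have hy₂q : y₂ ≤ q := by
      rw [div_le_iff₀ hb0]
      linarith
    have hpy₂ : p < y₂ := by
      rw [lt_div_iff₀ hb0]
      have e : a * p + b * p = p := by rw [← add_mul, hab, one_mul]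
      linarith
    have hy₂mem : y₂ ∈ Icc m 1 := ⟨hp.1.trans hpy₂.le, hy₂q.trans hq.2⟩
    have hy₂1 : y₂ ∈ Icc (0:ℝ) 1 := ⟨hm.1.trans hy₂mem.1, hy₂mem.2⟩
    have hconc : a * f p + b * f y₂ ≤ f y := by
      have := hccv.2 hp hy₂mem ha hb hab
      simp only [smul_eq_mul] at this
      rwa [heq] at this
    have h1 : loF f K p ≤ f p := lo_le_self hmono hK hp1
    have h2 : loF f K q ≤ f y₂ + K * (q - y₂) := by
      have := lo_le hmono hK hy₂1 q
      rwa [abs_of_nonneg (by linarith)] at this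
    have H1 : a * loF f K p ≤ a * f p := mul_le_mul_of_nonneg_left h1 ha
    have H2 : b * loF f K q ≤ b * (f y₂ + K * (q - y₂)) := mul_le_mul_of_nonneg_left h2 hb
    have e : K * (a * p + b * q - y) = b * (K * (q - y₂)) := by
      rw [← heq]; ring
    linarith

lemma lo_concave (hccv : ConcaveOn ℝ (Icc m 1) f) (hm : m ∈ Icc (0:ℝ) 1) :
    ConcaveOn ℝ (Icc m 1) (loF f K) := by
  refine ⟨convex_Icc _ _, ?_⟩
  intro p hp q hq a b ha hb hab
  simp only [smul_eq_mul]
  rcases le_total p q with hpq | hpq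
  · exact lo_concave_aux hmono hK hccv hm hp hq hpq ha hb hab
  · have := lo_concave_aux hmono hK hccv hm hq hp hpq hb ha (by linarith)
    have e1 : b * q + a * p = a * p + b * q := by ring
    have e2 : b * loF f K q + a * loF f K p = a * loF f K p + b * loF f K q := by ring
    rw [e1, e2] at this
    exact this

end lo

section hi

variable (hmono : MonotoneOn f (Icc 0 1)) (hK : 0 ≤ K)
include hmono hK

lemma hi_bdd (x : ℝ) :
    BddAbove (Set.range fun y : Icc (0:ℝ) 1 => f y - K * |x - (y:ℝ)|) := by
  refine ⟨f 1, ?_⟩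
  rintro v ⟨⟨y, hy⟩, rfl⟩
  have h1 : f y ≤ f 1 := hmono hy mem11 hy.2
  have h2 : 0 ≤ K * |x - y| := mul_nonneg hK (abs_nonneg _)
  simp only
  linarith

lemma hi_ge {y : ℝ} (hy : y ∈ Icc (0:ℝ) 1) (x : ℝ) :
    f y - K * |x - y| ≤ hiF f K x :=
  le_ciSup (hi_bdd hmono hK x) ⟨y, hy⟩

lemma hi_ge_self (hx : x ∈ Icc (0:ℝ) 1) : f x ≤ hiF f K x := by
  simpa using hi_ge hmono hK hx x

lemma hi_le_f1 (x : ℝ) : hiF f K x ≤ f 1 := by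
  refine ciSup_le ?_
  rintro ⟨y, hy⟩
  have h1 : f y ≤ f 1 := hmono hy mem11 hy.2
  have h2 : 0 ≤ K * |x - y| := mul_nonneg hK (abs_nonneg _)
  simp only
  linarith

lemma exists_hi (hx : x ∈ Icc (0:ℝ) 1) (hε : 0 < ε) :
    ∃ y, y ∈ Icc (0:ℝ) 1 ∧ x ≤ y ∧ hiF f K x < f y - K * (y - x) + ε := by
  have h : hiF f K x - ε < hiF f K x := by linarith
  obtain ⟨⟨y, hy⟩, hlt⟩ := exists_lt_of_lt_ciSup h
  rcases le_or_gt x y with hxy | hxy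
  · refine ⟨y, hy, hxy, ?_⟩
    rw [abs_of_nonpos (by linarith), neg_sub] at hlt
    linarith
  · refine ⟨x, hx, le_refl x, ?_⟩
    have h1 : f y ≤ f x := hmono hy hx hxy.le
    have h2 : 0 ≤ K * |x - y| := mul_nonneg hK (abs_nonneg _)
    simp only [sub_self, mul_zero, sub_zero]
    linarith

lemma hi_mono : MonotoneOn (hiF f K) (Icc 0 1) := by
  intro a ha b hb hab
  refine le_of_forall_pos_le_add fun ε hε => ?_
  obtain ⟨y, hy, hay, hlt⟩ := exists_hi hmono hK ha hε
  rcases le_or_gt b y with hby | hby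
  · have h1 : f y - K * |b - y| ≤ hiF f K b := hi_ge hmono hK hy b
    rw [abs_of_nonpos (by linarith), neg_sub] at h1
    have h2 : K * (y - b) ≤ K * (y - a) := by
      apply mul_le_mul_of_nonneg_left (by linarith) hK
    linarith
  · have h1 : f b ≤ hiF f K b := hi_ge_self hmono hK hb
    have h2 : f y ≤ f b := hmono hy hb hby.le
    have h3 : 0 ≤ K * (y - a) := mul_nonneg hK (by linarith)
    linarith

lemma hi_lip_oneside (x₁ x₂ : ℝ) : hiF f K x₁ ≤ hiF f K x₂ + K * |x₁ - x₂| := by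
  refine le_of_forall_pos_le_add fun ε hε => ?_
  have h : hiF f K x₁ - ε < hiF f K x₁ := by linarith
  obtain ⟨⟨y, hy⟩, hlt⟩ := exists_lt_of_lt_ciSup h
  have h1 : f y - K * |x₂ - y| ≤ hiF f K x₂ := hi_ge hmono hK hy x₂
  have h2 : |x₂ - y| ≤ |x₁ - y| + |x₁ - x₂| := by
    calc |x₂ - y| = |(x₁ - y) - (x₁ - x₂)| := by ring_nf
      _ ≤ |x₁ - y| + |x₁ - x₂| := abs_sub _ _
  have h4 : K * |x₂ - y| ≤ K * (|x₁ - y| + |x₁ - x₂|) :=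
    mul_le_mul_of_nonneg_left h2 hK
  have h5 : K * (|x₁ - y| + |x₁ - x₂|) = K * |x₁ - y| + K * |x₁ - x₂| := by ring
  simp only at hlt
  linarith

lemma hi_upper (hx : x ∈ Icc (0:ℝ) 1) (hδ : 0 < δ) :
    hiF f K x ≤ max (f (min (x + δ) 1)) (f 1 - K * δ) := by
  refine ciSup_le ?_
  rintro ⟨y, hy⟩
  rcases le_or_gt y (x + δ) with h | h
  · have hmem : min (x + δ) 1 ∈ Icc (0:ℝ) 1 :=
      ⟨le_min (by linarith [hx.1]) zero_le_one, min_le_right _ _⟩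
    have h1 : f y ≤ f (min (x + δ) 1) := hmono hy hmem (le_min h hy.2)
    have h2 : 0 ≤ K * |x - y| := mul_nonneg hK (abs_nonneg _)
    have := le_max_left (f (min (x + δ) 1)) (f 1 - K * δ)
    simp only
    linarith
  · have h1 : f y ≤ f 1 := hmono hy mem11 hy.2
    have h2 : K * δ ≤ K * |x - y| := by
      apply mul_le_mul_of_nonneg_left _ hK
      rw [abs_of_nonpos (by linarith), neg_sub]
      linarith
    have := le_max_right (f (min (x + δ) 1)) (f 1 - K * δ)
    simp only
    linarith

lemma hi_concave (hccv : ConcaveOn ℝ (Icc m 1) f) (hm : m ∈ Icc (0:ℝ) 1) :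
    ConcaveOn ℝ (Icc m 1) (hiF f K) := by
  refine ⟨convex_Icc _ _, ?_⟩
  intro p hp q hq a b ha hb hab
  simp only [smul_eq_mul]
  refine le_of_forall_pos_le_add fun ε hε => ?_
  have hp1 : p ∈ Icc (0:ℝ) 1 := ⟨hm.1.trans hp.1, hp.2⟩
  have hq1 : q ∈ Icc (0:ℝ) 1 := ⟨hm.1.trans hq.1, hq.2⟩
  obtain ⟨y₁, hy₁, hpy₁, h1⟩ := exists_hi hmono hK hp1 hε
  obtain ⟨y₂, hy₂, hqy₂, h2⟩ := exists_hi hmono hK hq1 hε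
  have hy₁m : y₁ ∈ Icc m 1 := ⟨hp.1.trans hpy₁, hy₁.2⟩
  have hy₂m : y₂ ∈ Icc m 1 := ⟨hq.1.trans hqy₂, hy₂.2⟩
  have hcomb : a * y₁ + b * y₂ ∈ Icc m 1 := by
    have := (convex_Icc m 1) hy₁m hy₂m ha hb hab
    simpa using this
  have hcomb1 : a * y₁ + b * y₂ ∈ Icc (0:ℝ) 1 := ⟨hm.1.trans hcomb.1, hcomb.2⟩
  have hfge : a * f y₁ + b * f y₂ ≤ f (a * y₁ + b * y₂) := by
    have := hccv.2 hy₁m hy₂m ha hb hab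
    simpa using this
  have hge : f (a * y₁ + b * y₂) - K * |a * p + b * q - (a * y₁ + b * y₂)| ≤
      hiF f K (a * p + b * q) := hi_ge hmono hK hcomb1 _
  have habs : |a * p + b * q - (a * y₁ + b * y₂)| = a * (y₁ - p) + b * (y₂ - q) := by
    rw [abs_of_nonpos]
    · ring
    · have := mul_le_mul_of_nonneg_left hpy₁ ha
      have := mul_le_mul_of_nonneg_left hqy₂ hb
      nlinarith
  have H1 : a * hiF f K p ≤ a * (f y₁ - K * (y₁ - p) + ε) :=
    mul_le_mul_of_nonneg_left h1.le ha
  have H2 : b * hiF f K q ≤ b * (f y₂ - K * (y₂ - q) + ε) :=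
    mul_le_mul_of_nonneg_left h2.le hb
  have e1 : K * (a * (y₁ - p) + b * (y₂ - q))
      = a * (K * (y₁ - p)) + b * (K * (y₂ - q)) := by ring
  have e2 : a * (f y₁ - K * (y₁ - p) + ε) + b * (f y₂ - K * (y₂ - q) + ε)
      = a * f y₁ + b * f y₂ - (a * (K * (y₁ - p)) + b * (K * (y₂ - q))) + ε := by
    have hb' : b = 1 - a := by linarith
    subst hb'; ring
  rw [habs] at hge
  linarith

lemma hi_convex_aux (hcvx : ConvexOn ℝ (Icc 0 m) f) (hm : m ∈ Icc (0:ℝ) 1)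
    (hp : p ∈ Icc (0:ℝ) m) (hq : q ∈ Icc (0:ℝ) m) (hpq : p ≤ q)
    {a b : ℝ} (ha : 0 ≤ a) (hb : 0 ≤ b) (hab : a + b = 1) :
    hiF f K (a * p + b * q) ≤ a * hiF f K p + b * hiF f K q := by
  have hp1 : p ∈ Icc (0:ℝ) 1 := ⟨hp.1, hp.2.trans hm.2⟩
  have hq1 : q ∈ Icc (0:ℝ) 1 := ⟨hq.1, hq.2.trans hm.2⟩
  have hxmem : a * p + b * q ∈ Icc (0:ℝ) m := by
    have := (convex_Icc (0:ℝ) m) hp hq ha hb hab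
    simpa using this
  have hx1 : a * p + b * q ∈ Icc (0:ℝ) 1 := ⟨hxmem.1, hxmem.2.trans hm.2⟩
  refine le_of_forall_pos_le_add fun ε hε => ?_
  obtain ⟨y, hy, hxy, hlt⟩ := exists_hi hmono hK hx1 hε
  rcases eq_or_lt_of_le ha with ha0 | ha0
  · -- a = 0, b = 1
    subst ha0
    have hb1 : b = 1 := by linarith
    subst hb1
    simp only [one_mul, zero_mul, zero_add] at hxy hlt ⊢
    have h1 : f y - K * (y - q) ≤ hiF f K q := by
      have := hi_ge hmono hK hy q
      rwa [abs_of_nonpos (by linarith), neg_sub] at this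
    linarith
  rcases le_or_gt q y with hqy | hqy
  · have h1 : f y - K * (y - p) ≤ hiF f K p := by
      have := hi_ge hmono hK hy p
      rwa [abs_of_nonpos (by linarith), neg_sub] at this
    have h2 : f y - K * (y - q) ≤ hiF f K q := by
      have := hi_ge hmono hK hy q
      rwa [abs_of_nonpos (by linarith), neg_sub] at this
    have H1 : a * (f y - K * (y - p)) ≤ a * hiF f K p := mul_le_mul_of_nonneg_left h1 ha
    have H2 : b * (f y - K * (y - q)) ≤ b * hiF f K q := mul_le_mul_of_nonneg_left h2 hb
    have e : a * (f y - K * (y - p)) + b * (f y - K * (y - q))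
        = f y - K * (y - (a * p + b * q)) := by
      have ha' : a = 1 - b := by linarith
      subst ha'; ring
    linarith
  · -- x ≤ y < q; set y₁ := (y - b*q)/a
    set y₁ : ℝ := (y - b * q) / a with hy₁def
    have heq : a * y₁ + b * q = y := by
      rw [hy₁def]; field_simp; ring
    have hpy₁ : p ≤ y₁ := by
      rw [hy₁def, le_div_iff₀ ha0]
      linarith
    have hy₁q : y₁ < q := by
      rw [hy₁def, div_lt_iff₀ ha0]
      have e : a * q + b * q = q := by rw [← add_mul, hab, one_mul]
      linarith
    have hy₁mem : y₁ ∈ Icc (0:ℝ) m := ⟨hp.1.trans hpy₁, hy₁q.le.trans hq.2⟩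
    have hy₁1 : y₁ ∈ Icc (0:ℝ) 1 := ⟨hy₁mem.1, hy₁mem.2.trans hm.2⟩
    have hconv : f y ≤ a * f y₁ + b * f q := by
      have := hcvx.2 hy₁mem hq ha hb hab
      simp only [smul_eq_mul] at this
      rwa [heq] at this
    have h1 : f y₁ - K * (y₁ - p) ≤ hiF f K p := by
      have := hi_ge hmono hK hy₁1 p
      rwa [abs_of_nonpos (by linarith), neg_sub] at this
    have h2 : f q ≤ hiF f K q := hi_ge_self hmono hK hq1
    have H1 : a * (f y₁ - K * (y₁ - p)) ≤ a * hiF f K p := mul_le_mul_of_nonneg_left h1 ha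
    have H2 : b * f q ≤ b * hiF f K q := mul_le_mul_of_nonneg_left h2 hb
    have e : K * (y - (a * p + b * q)) = a * (K * (y₁ - p)) := by
      rw [← heq]; ring
    linarith

lemma hi_convex (hcvx : ConvexOn ℝ (Icc 0 m) f) (hm : m ∈ Icc (0:ℝ) 1) :
    ConvexOn ℝ (Icc 0 m) (hiF f K) := by
  refine ⟨convex_Icc _ _, ?_⟩
  intro p hp q hq a b ha hb hab
  simp only [smul_eq_mul]
  rcases le_total p q with hpq | hpq
  · exact hi_convex_aux hmono hK hcvx hm hp hq hpq ha hb hab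
  · have := hi_convex_aux hmono hK hcvx hm hq hp hpq hb ha (by linarith)
    have e1 : b * q + a * p = a * p + b * q := by ring
    have e2 : b * hiF f K q + a * hiF f K p = a * hiF f K p + b * hiF f K q := by ring
    rw [e1, e2] at this
    exact this

end hi

noncomputable def gApprox (f : ℝ → ℝ) (m K x : ℝ) : ℝ :=
  max (loF f K x) (min (hiF f K x) (f m + K * (x - m)))

lemma convexOn_congr {s : Set ℝ} {F G : ℝ → ℝ} (h : ConvexOn ℝ s F)
    (heq : ∀ x ∈ s, F x = G x) : ConvexOn ℝ s G := by
  refine ⟨h.1, fun p hp q hq a b ha hb hab => ?_⟩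
  rw [← heq p hp, ← heq q hq, ← heq _ (h.1 hp hq ha hb hab)]
  exact h.2 hp hq ha hb hab

lemma concaveOn_congr {s : Set ℝ} {F G : ℝ → ℝ} (h : ConcaveOn ℝ s F)
    (heq : ∀ x ∈ s, F x = G x) : ConcaveOn ℝ s G := by
  refine ⟨h.1, fun p hp q hq a b ha hb hab => ?_⟩
  rw [← heq p hp, ← heq q hq, ← heq _ (h.1 hp hq ha hb hab)]
  exact h.2 hp hq ha hb hab

lemma line_convex (c K m : ℝ) {s : Set ℝ} (hs : Convex ℝ s) :
    ConvexOn ℝ s (fun x => c + K * (x - m)) := by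
  refine ⟨hs, fun p hp q hq a b ha hb hab => ?_⟩
  simp only [smul_eq_mul]
  have hb' : b = 1 - a := by linarith
  subst hb'
  exact le_of_eq (by ring)

lemma line_concave (c K m : ℝ) {s : Set ℝ} (hs : Convex ℝ s) :
    ConcaveOn ℝ s (fun x => c + K * (x - m)) := by
  refine ⟨hs, fun p hp q hq a b ha hb hab => ?_⟩
  simp only [smul_eq_mul]
  have hb' : b = 1 - a := by linarith
  subst hb'
  exact le_of_eq (by ring)

section gA

set_option linter.unusedSectionVars false

variable (hmono : MonotoneOn f (Icc 0 1)) (hm : m ∈ Icc (0:ℝ) 1) (hK : 0 ≤ K)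
include hmono hm hK

lemma gA_eq_max (hx : x ∈ Icc (0:ℝ) m) :
    gApprox f m K x = max (loF f K x) (f m + K * (x - m)) := by
  have h1 : f m + K * (x - m) ≤ hiF f K x := by
    have := hi_ge hmono hK hm x
    rwa [abs_of_nonpos (by linarith [hx.2]), neg_sub,
      show f m - K * (m - x) = f m + K * (x - m) by ring] at this
  unfold gApprox
  rw [min_eq_right h1]

lemma gA_eq_min (hx : x ∈ Icc m 1) :
    gApprox f m K x = min (hiF f K x) (f m + K * (x - m)) := by
  have hx1 : x ∈ Icc (0:ℝ) 1 := ⟨hm.1.trans hx.1, hx.2⟩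
  have h1 : loF f K x ≤ hiF f K x :=
    (lo_le_self hmono hK hx1).trans (hi_ge_self hmono hK hx1)
  have h2 : loF f K x ≤ f m + K * (x - m) := by
    have := lo_le hmono hK hm x
    rwa [abs_of_nonneg (by linarith [hx.1])] at this
  unfold gApprox
  rw [max_eq_right (le_min h1 h2)]

lemma gA_convex (hcvx : ConvexOn ℝ (Icc 0 m) f) : ConvexOn ℝ (Icc 0 m) (gApprox f m K) := by
  have h1 : ConvexOn ℝ (Icc 0 m) (loF f K) := lo_convex hmono hK hcvx hm
  have h2 : ConvexOn ℝ (Icc 0 m) (fun x => f m + K * (x - m)) :=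
    line_convex _ _ _ (convex_Icc _ _)
  refine convexOn_congr (h1.sup h2) fun x hx => ?_
  rw [Pi.sup_apply]
  exact (gA_eq_max hmono hm hK hx).symm

lemma gA_concave (hccv : ConcaveOn ℝ (Icc m 1) f) : ConcaveOn ℝ (Icc m 1) (gApprox f m K) := by
  have h1 : ConcaveOn ℝ (Icc m 1) (hiF f K) := hi_concave hmono hK hccv hm
  have h2 : ConcaveOn ℝ (Icc m 1) (fun x => f m + K * (x - m)) :=
    line_concave _ _ _ (convex_Icc _ _)
  refine concaveOn_congr (h1.inf h2) fun x hx => ?_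
  rw [Pi.inf_apply]
  exact (gA_eq_min hmono hm hK hx).symm

lemma gA_mono : MonotoneOn (gApprox f m K) (Icc 0 1) := by
  have h1 : MonotoneOn (loF f K) (Icc 0 1) := lo_mono hmono hK
  have h2 : MonotoneOn (hiF f K) (Icc 0 1) := hi_mono hmono hK
  have h3 : MonotoneOn (fun x : ℝ => f m + K * (x - m)) (Icc 0 1) := by
    intro a _ b _ hab
    simp only
    nlinarith [mul_le_mul_of_nonneg_left hab hK]
  exact h1.max (h2.min h3)

lemma gA_lip : LipschitzWith (Real.toNNReal K) (gApprox f m K) := by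
  have hlo : LipschitzWith (Real.toNNReal K) (loF f K) := by
    refine LipschitzWith.of_dist_le_mul fun a b => ?_
    rw [Real.dist_eq, Real.dist_eq, Real.coe_toNNReal K hK]
    rw [abs_sub_le_iff]
    constructor
    · have := lo_lip_oneside hmono hK a b; linarith
    · have := lo_lip_oneside hmono hK b a
      rw [abs_sub_comm] at this; linarith
  have hhi : LipschitzWith (Real.toNNReal K) (hiF f K) := by
    refine LipschitzWith.of_dist_le_mul fun a b => ?_
    rw [Real.dist_eq, Real.dist_eq, Real.coe_toNNReal K hK]
    rw [abs_sub_le_iff]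
    constructor
    · have := hi_lip_oneside hmono hK a b; linarith
    · have := hi_lip_oneside hmono hK b a
      rw [abs_sub_comm] at this; linarith
  have hline : LipschitzWith (Real.toNNReal K) (fun x : ℝ => f m + K * (x - m)) := by
    refine LipschitzWith.of_dist_le_mul fun a b => ?_
    rw [Real.dist_eq, Real.dist_eq, Real.coe_toNNReal K hK]
    have : f m + K * (a - m) - (f m + K * (b - m)) = K * (a - b) := by ring
    rw [this, abs_mul, abs_of_nonneg hK]
  have := hlo.max (hhi.min hline)
  simp only [max_self] at this; exact this

lemma gA_le_f1 (hx : x ∈ Icc (0:ℝ) 1) : gApprox f m K x ≤ f 1 := by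
  have h1 : loF f K x ≤ f x := lo_le_self hmono hK hx
  have h2 : f x ≤ f 1 := hmono hx mem11 hx.2
  have h3 : hiF f K x ≤ f 1 := hi_le_f1 hmono hK x
  unfold gApprox
  exact max_le (by linarith) ((min_le_left _ _).trans h3)

lemma f0_le_gA (x : ℝ) : f 0 ≤ gApprox f m K x :=
  (f0_le_lo hmono hK x).trans (le_max_left _ _)

lemma gA_diff (hx : x ∈ Icc (0:ℝ) 1) :
    |gApprox f m K x - f x| ≤ max (f x - loF f K x) (hiF f K x - f x) := by
  have h1 : loF f K x ≤ gApprox f m K x := le_max_left _ _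
  have h2 : gApprox f m K x ≤ hiF f K x := by
    have ha : loF f K x ≤ hiF f K x :=
      (lo_le_self hmono hK hx).trans (hi_ge_self hmono hK hx)
    exact max_le ha (min_le_left _ _)
  rw [abs_le]
  constructor
  · have := le_max_left (f x - loF f K x) (hiF f K x - f x)
    linarith
  · have := le_max_right (f x - loF f K x) (hiF f K x - f x)
    linarith

lemma gA_at_m : gApprox f m K m = f m := by
  have h1 : loF f K m ≤ f m := lo_le_self hmono hK hm
  have h2 : f m ≤ hiF f K m := hi_ge_self hmono hK hm
  unfold gApprox
  rw [show f m + K * (m - m) = f m by ring, min_eq_right h2, max_eq_right h1]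

end gA

section cont

variable (hcvx : ConvexOn ℝ (Icc 0 m) f) (hccv : ConcaveOn ℝ (Icc m 1) f)
  (hmono : MonotoneOn f (Icc 0 1)) (hm : m ∈ Icc (0:ℝ) 1)
include hcvx hccv hmono hm

set_option linter.unusedSectionVars false

lemma cont_left (hx : x ∈ Icc (0:ℝ) 1) (hxm : x ≠ m) (hε : 0 < ε) :
    ∃ δ, 0 < δ ∧ f x - f (max (x - δ) 0) ≤ ε := by
  have hC : f 0 ≤ f 1 := hmono mem01 mem11 zero_le_one
  have hC1 : (0:ℝ) < f 1 - f 0 + 1 := by linarith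
  set C := f 1 - f 0 with hCdef
  rcases lt_or_gt_of_ne hxm with hlt | hgt
  · -- x < m : use convexity
    rcases eq_or_lt_of_le hx.1 with hx0 | hx0
    · -- x = 0
      refine ⟨1, one_pos, ?_⟩
      rw [max_eq_right (by linarith), ← hx0]
      linarith
    · set d := m - x with hd
      have hd0 : 0 < d := by rw [hd]; linarith
      set δ := min x (d * ε / (C + 1)) with hδdef
      have hδ0 : 0 < δ := lt_min hx0 (by positivity)
      have hδx : δ ≤ x := min_le_left _ _
      have hδ2 : δ ≤ d * ε / (C + 1) := min_le_right _ _
      refine ⟨δ, hδ0, ?_⟩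
      rw [max_eq_left (by linarith)]
      set s := δ / (d + δ) with hs
      have hdδ : 0 < d + δ := by linarith
      have hs0 : 0 ≤ s := by positivity
      have hs1 : s ≤ 1 := by rw [hs, div_le_one hdδ]; linarith
      have hsd : s * (d + δ) = δ := by rw [hs]; field_simp
      have hpt : (1 - s) * (x - δ) + s * m = x := by
        have e : (1 - s) * (x - δ) + s * m = x - δ + s * (d + δ) := by rw [hd]; ring
        rw [e, hsd]; ring
      have hxδm : x - δ ∈ Icc (0:ℝ) m := ⟨by linarith, by linarith⟩
      have hmm : m ∈ Icc (0:ℝ) m := ⟨hm.1, le_refl m⟩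
      have H := hcvx.2 hxδm hmm (by linarith : (0:ℝ) ≤ 1 - s) hs0 (by ring)
      simp only [smul_eq_mul] at H
      rw [hpt] at H
      have hfm : f m - f (x - δ) ≤ C := by
        have h1 : f m ≤ f 1 := hmono hm mem11 hm.2
        have h2 : f 0 ≤ f (x - δ) :=
          hmono mem01 ⟨hxδm.1, by linarith [hx.2]⟩ hxδm.1
        rw [hCdef]; linarith
      have hkey : s * (C + 1) ≤ ε := by
        rw [hs, div_mul_eq_mul_div, div_le_iff₀ hdδ]
        have h1 : δ * (C + 1) ≤ d * ε := by
          have h2 := mul_le_mul_of_nonneg_right hδ2 hC1.le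
          rwa [div_mul_cancel₀ _ (ne_of_gt hC1)] at h2
        nlinarith [mul_nonneg hδ0.le hε.le]
      have hs_fm : s * (f m - f (x - δ)) ≤ s * C := mul_le_mul_of_nonneg_left hfm hs0
      nlinarith
  · -- x > m : use concavity
    set d := x - m with hd
    have hd0 : 0 < d := by rw [hd]; linarith
    set δ := min d (d * ε / (C + 1)) with hδdef
    have hδ0 : 0 < δ := lt_min hd0 (by positivity)
    have hδd : δ ≤ d := min_le_left _ _
    have hδ2 : δ ≤ d * ε / (C + 1) := min_le_right _ _
    refine ⟨δ, hδ0, ?_⟩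
    rw [max_eq_left (by linarith [hm.1])]
    set t := (d - δ) / d with ht
    have ht0 : 0 ≤ t := div_nonneg (by linarith) hd0.le
    have ht1 : t ≤ 1 := by rw [ht, div_le_one hd0]; linarith
    have htd : t * d = d - δ := by rw [ht]; field_simp
    have hpt : (1 - t) * m + t * x = x - δ := by
      have e : (1 - t) * m + t * x = m + t * d := by rw [hd]; ring
      rw [e, htd, hd]; ring
    have hmm : m ∈ Icc m 1 := ⟨le_refl m, hm.2⟩
    have hxm1 : x ∈ Icc m 1 := ⟨by linarith, hx.2⟩
    have H := hccv.2 hmm hxm1 (by linarith : (0:ℝ) ≤ 1 - t) ht0 (by ring)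
    simp only [smul_eq_mul] at H
    rw [hpt] at H
    have hfxm : f x - f m ≤ C := by
      have h1 : f x ≤ f 1 := hmono hx mem11 hx.2
      have h2 : f 0 ≤ f m := hmono mem01 hm hm.1
      rw [hCdef]; linarith
    have hkey : (1 - t) * (C + 1) ≤ ε := by
      have h1t : 1 - t = δ / d := by rw [ht]; field_simp; ring
      rw [h1t, div_mul_eq_mul_div, div_le_iff₀ hd0]
      have h2 := mul_le_mul_of_nonneg_right hδ2 hC1.le
      rw [div_mul_cancel₀ _ (ne_of_gt hC1)] at h2
      linarith
    have hmul : (1 - t) * (f x - f m) ≤ (1 - t) * C :=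
      mul_le_mul_of_nonneg_left hfxm (by linarith)
    nlinarith

lemma cont_right (hx : x ∈ Icc (0:ℝ) 1) (hxm : x ≠ m) (hε : 0 < ε) :
    ∃ δ, 0 < δ ∧ f (min (x + δ) 1) - f x ≤ ε := by
  have hC : f 0 ≤ f 1 := hmono mem01 mem11 zero_le_one
  have hC1 : (0:ℝ) < f 1 - f 0 + 1 := by linarith
  set C := f 1 - f 0 with hCdef
  rcases lt_or_gt_of_ne hxm with hlt | hgt
  · -- x < m : use convexity
    set d := m - x with hd
    have hd0 : 0 < d := by rw [hd]; linarith
    set δ := min d (d * ε / (C + 1)) with hδdef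
    have hδ0 : 0 < δ := lt_min hd0 (by positivity)
    have hδd : δ ≤ d := min_le_left _ _
    have hδ2 : δ ≤ d * ε / (C + 1) := min_le_right _ _
    refine ⟨δ, hδ0, ?_⟩
    rw [min_eq_left (by linarith [hm.2])]
    set u := δ / d with hu
    have hu0 : 0 ≤ u := by positivity
    have hu1 : u ≤ 1 := by rw [hu, div_le_one hd0]; linarith
    have hud : u * d = δ := by rw [hu]; field_simp
    have hpt : (1 - u) * x + u * m = x + δ := by
      have e : (1 - u) * x + u * m = x + u * d := by rw [hd]; ring
      rw [e, hud]
    have hxm0 : x ∈ Icc (0:ℝ) m := ⟨hx.1, by linarith⟩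
    have hmm : m ∈ Icc (0:ℝ) m := ⟨hm.1, le_refl m⟩
    have H := hcvx.2 hxm0 hmm (by linarith : (0:ℝ) ≤ 1 - u) hu0 (by ring)
    simp only [smul_eq_mul] at H
    rw [hpt] at H
    have hfm : f m - f x ≤ C := by
      have h1 : f m ≤ f 1 := hmono hm mem11 hm.2
      have h2 : f 0 ≤ f x := hmono mem01 hx hx.1
      rw [hCdef]; linarith
    have hkey : u * (C + 1) ≤ ε := by
      rw [hu, div_mul_eq_mul_div, div_le_iff₀ hd0]
      have h2 := mul_le_mul_of_nonneg_right hδ2 hC1.le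
      rw [div_mul_cancel₀ _ (ne_of_gt hC1)] at h2
      linarith
    have hmul : u * (f m - f x) ≤ u * C := mul_le_mul_of_nonneg_left hfm hu0
    nlinarith
  · -- x > m : use concavity
    rcases eq_or_lt_of_le hx.2 with hx1 | hx1
    · -- x = 1
      refine ⟨1, one_pos, ?_⟩
      rw [min_eq_right (by linarith), hx1]
      linarith
    · set d := x - m with hd
      have hd0 : 0 < d := by rw [hd]; linarith
      set δ := min (1 - x) (d * ε / (C + 1)) with hδdef
      have hδ0 : 0 < δ := lt_min (by linarith) (by positivity)
      have hδ1 : δ ≤ 1 - x := min_le_left _ _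
      have hδ2 : δ ≤ d * ε / (C + 1) := min_le_right _ _
      refine ⟨δ, hδ0, ?_⟩
      rw [min_eq_left (by linarith)]
      set D := d + δ with hD
      have hD0 : 0 < D := by rw [hD]; linarith
      set s := d / D with hs
      have hs0 : 0 ≤ s := by positivity
      have hs1 : s ≤ 1 := by rw [hs, div_le_one hD0, hD]; linarith
      have hsD : s * D = d := by rw [hs]; field_simp
      have hpt : (1 - s) * m + s * (x + δ) = x := by
        have e : (1 - s) * m + s * (x + δ) = m + s * D := by rw [hD, hd]; ring
        rw [e, hsD, hd]; ring
      have hmm : m ∈ Icc m 1 := ⟨le_refl m, hm.2⟩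
      have hxδ1 : x + δ ∈ Icc m 1 := ⟨by linarith, by linarith⟩
      have H := hccv.2 hmm hxδ1 (by linarith : (0:ℝ) ≤ 1 - s) hs0 (by ring)
      simp only [smul_eq_mul] at H
      rw [hpt] at H
      -- H : (1-s) * f m + s * f (x+δ) ≤ f x
      have hfxm : f x - f m ≤ C := by
        have h1 : f x ≤ f 1 := hmono hx mem11 hx.2
        have h2 : f 0 ≤ f m := hmono mem01 hm hm.1
        rw [hCdef]; linarith
      have Hmul := mul_le_mul_of_nonneg_left H hD0.le
      have e1 : D * ((1 - s) * f m + s * f (x + δ))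
          = D * f m - (s * D) * f m + (s * D) * f (x + δ) := by ring
      rw [e1, hsD] at Hmul
      -- Hmul : D * f m - d * f m + d * f (x+δ) ≤ D * f x
      have hkey : δ * (C + 1) ≤ d * ε := by
        have h2 := mul_le_mul_of_nonneg_right hδ2 hC1.le
        rwa [div_mul_cancel₀ _ (ne_of_gt hC1)] at h2
      have hfin : d * (f (x + δ) - f x) ≤ d * ε := by
        have h3 : d * (f (x + δ) - f x) ≤ δ * (f x - f m) := by
          have hDd : D - d = δ := by rw [hD]; ring
          nlinarith [Hmul]
        have h4 : δ * (f x - f m) ≤ δ * C := mul_le_mul_of_nonneg_left hfxm hδ0.le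
        nlinarith [mul_nonneg hδ0.le hε.le]
      exact le_of_mul_le_mul_left (by linarith) hd0

lemma cont_pt (hx : x ∈ Icc (0:ℝ) 1) (hxm : x ≠ m) (hε : 0 < ε) :
    ∃ δ, 0 < δ ∧ f x - f (max (x - δ) 0) ≤ ε ∧ f (min (x + δ) 1) - f x ≤ ε := by
  obtain ⟨δ₁, hδ₁, h₁⟩ := cont_left hcvx hccv hmono hm hx hxm hε
  obtain ⟨δ₂, hδ₂, h₂⟩ := cont_right hcvx hccv hmono hm hx hxm hε
  have hδ : 0 < min δ₁ δ₂ := lt_min hδ₁ hδ₂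
  refine ⟨min δ₁ δ₂, hδ, ?_, ?_⟩
  · have hmem1 : max (x - min δ₁ δ₂) 0 ∈ Icc (0:ℝ) 1 :=
      ⟨le_max_right _ _, max_le (by linarith [hx.2]) zero_le_one⟩
    have hmem2 : max (x - δ₁) 0 ∈ Icc (0:ℝ) 1 :=
      ⟨le_max_right _ _, max_le (by linarith [hx.2]) zero_le_one⟩
    have hle : max (x - δ₁) 0 ≤ max (x - min δ₁ δ₂) 0 :=
      max_le_max (by linarith [min_le_left δ₁ δ₂]) (le_refl 0)
    have := hmono hmem2 hmem1 hle
    linarith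
  · have hmem1 : min (x + min δ₁ δ₂) 1 ∈ Icc (0:ℝ) 1 :=
      ⟨le_min (by linarith [hx.1]) zero_le_one, min_le_right _ _⟩
    have hmem2 : min (x + δ₂) 1 ∈ Icc (0:ℝ) 1 :=
      ⟨le_min (by linarith [hx.1]) zero_le_one, min_le_right _ _⟩
    have hle : min (x + min δ₁ δ₂) 1 ≤ min (x + δ₂) 1 :=
      min_le_min (by linarith [min_le_right δ₁ δ₂]) (le_refl 1)
    have := hmono hmem1 hmem2 hle
    linarith

end cont

section conv

variable (hcvx : ConvexOn ℝ (Icc 0 m) f) (hccv : ConcaveOn ℝ (Icc m 1) f)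
  (hmono : MonotoneOn f (Icc 0 1)) (hm : m ∈ Icc (0:ℝ) 1)
include hcvx hccv hmono hm

lemma gA_tendsto (hx : x ∈ Icc (0:ℝ) 1) :
    Filter.Tendsto (fun n : ℕ => gApprox f m ((n:ℝ)+1) x) Filter.atTop (nhds (f x)) := by
  rcases eq_or_ne x m with hxm | hxm
  · have he : (fun n : ℕ => gApprox f m ((n:ℝ)+1) x) = fun _ => f x := by
      funext n
      rw [hxm]
      exact gA_at_m hmono hm (by positivity)
    rw [he]
    exact tendsto_const_nhds
  · rw [Metric.tendsto_atTop]
    intro ε hε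
    have hε2 : 0 < ε/2 := by linarith
    obtain ⟨δ, hδ0, hl, hr⟩ := cont_pt hcvx hccv hmono hm hx hxm hε2
    obtain ⟨N, hN⟩ := exists_nat_ge ((f 1 - f 0) / δ)
    refine ⟨N, fun n hn => ?_⟩
    have hK : (0:ℝ) ≤ (n:ℝ)+1 := by positivity
    have hfx1 : f x ≤ f 1 := hmono hx mem11 hx.2
    have h0fx : f 0 ≤ f x := hmono mem01 hx hx.1
    have hKδ : f 1 - f 0 ≤ ((n:ℝ)+1)*δ := by
      rw [div_le_iff₀ hδ0] at hN
      have h2 : (N:ℝ) ≤ (n:ℝ) := Nat.cast_le.2 hn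
      nlinarith [hδ0.le]
    have hlow := lo_lower hmono hK hx hδ0
    have hup := hi_upper hmono hK hx hδ0
    have hlo2 : f x - loF f ((n:ℝ)+1) x ≤ ε/2 := by
      rcases min_cases (f (max (x - δ) 0)) (f 0 + ((n:ℝ)+1) * δ) with ⟨he, _⟩ | ⟨he, _⟩ <;>
        rw [he] at hlow <;> linarith
    have hhi2 : hiF f ((n:ℝ)+1) x - f x ≤ ε/2 := by
      rcases max_cases (f (min (x + δ) 1)) (f 1 - ((n:ℝ)+1) * δ) with ⟨he, _⟩ | ⟨he, _⟩ <;>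
        rw [he] at hup <;> linarith
    have hdiff := gA_diff hmono hm hK hx
    rw [Real.dist_eq]
    have hmax : max (f x - loF f ((n:ℝ)+1) x) (hiF f ((n:ℝ)+1) x - f x) ≤ ε/2 :=
      max_le hlo2 hhi2
    linarith [hdiff.trans hmax]

end conv

end Stmt12Aux

open Stmt12Aux

/-- Proposition S? (Proposition `clconv`(a)): the class `F^m` is a convex cone
(closed under nonnegative scaling and addition), and its Lipschitz elements are
dense in `F^m_ν` with respect to the `L²(ν)` norm. -/
theorem stmt12 (ν : Measure ℝ) [IsProbabilityMeasure ν]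
    (hν : ν (Set.Icc (0 : ℝ) 1)ᶜ = 0)
    (m : ℝ) (hm : m ∈ Set.Icc (0 : ℝ) 1) :
    let Fm : (ℝ → ℝ) → Prop := fun f =>
      ConvexOn ℝ (Set.Icc 0 m) f ∧ ConcaveOn ℝ (Set.Icc m 1) f ∧
        MonotoneOn f (Set.Icc (0 : ℝ) 1)
    (∀ f, Fm f → ∀ c : ℝ, 0 ≤ c → Fm (fun x => c * f x)) ∧
    (∀ f g, Fm f → Fm g → Fm (fun x => f x + g x)) ∧
    (∀ f, Fm f → ∀ ε : ℝ, 0 < ε → ∃ g, Fm g ∧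
      (∃ K : NNReal, LipschitzOnWith K g (Set.Icc 0 1)) ∧
      ∫ x, (g x - f x) ^ 2 ∂ν < ε) := by
  intro Fm
  refine ⟨?_, ?_, ?_⟩
  · rintro f ⟨h1, h2, h3⟩ c hc
    refine ⟨?_, ?_, ?_⟩
    · simpa [smul_eq_mul] using h1.smul hc
    · simpa [smul_eq_mul] using h2.smul hc
    · intro a ha b hb hab
      exact mul_le_mul_of_nonneg_left (h3 ha hb hab) hc
  · rintro f g ⟨f1, f2, f3⟩ ⟨g1, g2, g3⟩
    exact ⟨f1.add g1, f2.add g2, f3.add g3⟩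
  · rintro f ⟨hcvx, hccv, hmono⟩ ε hε
    set fc : ℝ → ℝ := fun x => f (max 0 (min x 1)) with hfc
    have hfc_mono : Monotone fc := by
      intro a b hab
      have hma : max 0 (min a 1) ∈ Icc (0:ℝ) 1 :=
        ⟨le_max_left _ _, max_le zero_le_one (min_le_right _ _)⟩
      have hmb : max 0 (min b 1) ∈ Icc (0:ℝ) 1 :=
        ⟨le_max_left _ _, max_le zero_le_one (min_le_right _ _)⟩
      exact hmono hma hmb (max_le_max (le_refl 0) (min_le_min hab (le_refl 1)))
    have hfc_meas : Measurable fc := hfc_mono.measurable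
    have hfc_eq : ∀ x ∈ Icc (0:ℝ) 1, fc x = f x := by
      intro x hx
      rw [hfc]
      simp only
      rw [min_eq_left hx.2, max_eq_right hx.1]
    have hae : ∀ᵐ x ∂ν, x ∈ Icc (0:ℝ) 1 := by
      rw [ae_iff]
      exact hν
    have hKn : ∀ n : ℕ, (0:ℝ) ≤ (n:ℝ)+1 := fun n => by positivity
    have hlip : ∀ n : ℕ, LipschitzWith (Real.toNNReal ((n:ℝ)+1)) (gApprox f m ((n:ℝ)+1)) :=
      fun n => gA_lip hmono hm (hKn n)
    have hmeas : ∀ n : ℕ,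
        AEStronglyMeasurable (fun x => (gApprox f m ((n:ℝ)+1) x - fc x)^2) ν :=
      fun n => ((((hlip n).continuous).measurable.sub hfc_meas).pow_const 2).aestronglyMeasurable
    have hbound : ∀ n : ℕ, ∀ᵐ x ∂ν,
        ‖(gApprox f m ((n:ℝ)+1) x - fc x)^2‖ ≤ (f 1 - f 0)^2 := by
      intro n
      filter_upwards [hae] with x hx
      rw [hfc_eq x hx, Real.norm_eq_abs, abs_of_nonneg (sq_nonneg _)]
      have h1 : f 0 ≤ gApprox f m ((n:ℝ)+1) x := f0_le_gA hmono hm (hKn n) x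
      have h2 : gApprox f m ((n:ℝ)+1) x ≤ f 1 := gA_le_f1 hmono hm (hKn n) hx
      have h3 : f 0 ≤ f x := hmono mem01 hx hx.1
      have h4 : f x ≤ f 1 := hmono hx mem11 hx.2
      apply sq_le_sq' <;> linarith
    have hlim : ∀ᵐ x ∂ν, Filter.Tendsto
        (fun n : ℕ => (gApprox f m ((n:ℝ)+1) x - fc x)^2) Filter.atTop (nhds 0) := by
      filter_upwards [hae] with x hx
      rw [hfc_eq x hx]
      have h := gA_tendsto hcvx hccv hmono hm hx
      have h2 : Filter.Tendsto (fun n : ℕ => gApprox f m ((n:ℝ)+1) x - f x)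
          Filter.atTop (nhds 0) := by
        simpa using h.sub (tendsto_const_nhds (x := f x))
      have h3 := h2.pow 2
      simpa using h3
    have hint := MeasureTheory.tendsto_integral_of_dominated_convergence
      (fun _ => (f 1 - f 0)^2) hmeas (integrable_const _) hbound hlim
    rw [MeasureTheory.integral_zero] at hint
    have hev : ∀ᶠ n : ℕ in Filter.atTop,
        (∫ x, (gApprox f m ((n:ℝ)+1) x - fc x)^2 ∂ν) < ε :=
      hint.eventually_lt_const hε
    obtain ⟨n, hn⟩ := hev.exists
    refine ⟨gApprox f m ((n:ℝ)+1),
      ⟨gA_convex hmono hm (hKn n) hcvx, gA_concave hmono hm (hKn n) hccv,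
        gA_mono hmono hm (hKn n)⟩,
      ⟨Real.toNNReal ((n:ℝ)+1), (hlip n).lipschitzOnWith⟩, ?_⟩
    have heq : ∫ x, (gApprox f m ((n:ℝ)+1) x - f x)^2 ∂ν
        = ∫ x, (gApprox f m ((n:ℝ)+1) x - fc x)^2 ∂ν := by
      apply integral_congr_ae
      filter_upwards [hae] with x hx
      rw [hfc_eq x hx]
    rw [heq]
    exact hn
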